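/- Let (X, ψ) be a weighted space and f ∈ 𝓑^ψ(X) with sup_{x∈X} f(x) > 0. Then there exists z ∈ X such that ψ(x)^{-1} f(x) ≤ ψ(z)^{-1} f(z) for all x ∈ X, i.e., the function ψ^{-1} f attains its supremum. -/

import Mathlib

/-- `f` is a bounded continuous function. -/
def MemCb {X : Type*} [TopologicalSpace X] (g : X → ℝ) : Prop :=
  Continuous g ∧ ∃ M : ℝ, ∀ x, |g x| ≤ M

/-- `f ∈ 𝓑^ψ(X)`: `f` lies in the `‖·‖_ψ`-closure of the bounded continuous functions. -/
def MemBpsi {X : Type*} [TopologicalSpace X] (ψ : X → ℝ) (f : X → ℝ) : Prop :=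
  ∀ ε > (0 : ℝ), ∃ g : X → ℝ, MemCb g ∧ ∀ x, (ψ x)⁻¹ * |f x - g x| ≤ ε

/-- An upper-semicontinuous-like function on a nonempty compact set attains its maximum. -/
lemma exists_max_of_usc {X : Type*} [TopologicalSpace X] {K : Set X} (hK : IsCompact K)
    (hne : K.Nonempty) (h : X → ℝ)
    (husc : ∀ x ∈ K, ∀ t, h x < t → ∃ U, IsOpen U ∧ x ∈ U ∧ ∀ y ∈ U ∩ K, h y < t) :
    ∃ z ∈ K, ∀ x ∈ K, h x ≤ h z := by
  by_contra hcon
  push_neg at hcon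
  have key : ∀ x : X, ∃ w : X, ∃ U : Set X, x ∈ K →
      w ∈ K ∧ IsOpen U ∧ x ∈ U ∧ ∀ y ∈ U ∩ K, h y < h w := by
    intro x
    by_cases hx : x ∈ K
    · obtain ⟨w, hwK, hw⟩ := hcon x hx
      obtain ⟨U, hU, hxU, hUlt⟩ := husc x hx (h w) hw
      exact ⟨w, U, fun _ => ⟨hwK, hU, hxU, hUlt⟩⟩
    · exact ⟨x, ∅, fun h' => absurd h' hx⟩
  choose w U hwU using key
  obtain ⟨t, htK, hcover⟩ := hK.elim_nhds_subcover U
    (fun x hx => ((hwU x hx).2.1).mem_nhds (hwU x hx).2.2.1)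
  have htne : t.Nonempty := by
    obtain ⟨x0, hx0⟩ := hne
    obtain ⟨i, hi, _⟩ := Set.mem_iUnion₂.1 (hcover hx0)
    exact ⟨i, hi⟩
  obtain ⟨i, hi, hmax⟩ := t.exists_max_image (fun x => h (w x)) htne
  have hwiK : w i ∈ K := (hwU i (htK i hi)).1
  obtain ⟨j, hj, hmem⟩ := Set.mem_iUnion₂.1 (hcover hwiK)
  have hlt : h (w i) < h (w j) := (hwU j (htK j hj)).2.2.2 (w i) ⟨hmem, hwiK⟩
  exact absurd (hmax j hj) (not_le.2 hlt)

/-- If `f ∈ 𝓑^ψ(X)` has positive supremum, then `ψ⁻¹ f` attains its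
supremum at some `z ∈ X`. -/
theorem memBpsi_attains_weighted_max
    {X : Type*} [TopologicalSpace X] [T2Space X] [CompletelyRegularSpace X]
    (ψ : X → ℝ) (hpos : ∀ x, 0 < ψ x)
    (hcomp : ∀ R > (0 : ℝ), IsCompact {x : X | ψ x ≤ R})
    (f : X → ℝ) (hf : MemBpsi ψ f) (hsup : ∃ x, 0 < f x) :
    ∃ z : X, ∀ x, (ψ x)⁻¹ * f x ≤ (ψ z)⁻¹ * f z := by
  obtain ⟨x₀, hx₀⟩ := hsup
  have hψ₀ := hpos x₀
  set c : ℝ := (ψ x₀)⁻¹ * f x₀ with hc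
  have hcpos : 0 < c := mul_pos (inv_pos.2 hψ₀) hx₀
  -- ψ is lower semicontinuous
  have hlsc : LowerSemicontinuous ψ := by
    rw [lowerSemicontinuous_iff_isClosed_preimage]
    intro y
    rcases le_or_gt y 0 with hy | hy
    · have : ψ ⁻¹' Set.Iic y = ∅ := by
        ext x
        simp only [Set.mem_preimage, Set.mem_Iic, Set.mem_empty_iff_false, iff_false, not_le]
        exact lt_of_le_of_lt hy (hpos x)
      rw [this]; exact isClosed_empty
    · exact (hcomp y hy).isClosed
  obtain ⟨g, ⟨hgc, M, hgM⟩, hfg⟩ := hf (c / 4) (by positivity)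
  have hM0 : 0 ≤ M := le_trans (abs_nonneg _) (hgM x₀)
  obtain ⟨m, hm1, hm2⟩ : ∃ m : ℝ, 4 * M / c ≤ m ∧ ψ x₀ ≤ m :=
    ⟨max (4 * M / c) (ψ x₀), le_max_left _ _, le_max_right _ _⟩
  set R : ℝ := m + 1 with hR
  have hR0 : 0 < R := by linarith
  have hx₀R : ψ x₀ ≤ R := by linarith
  set K : Set X := {x : X | ψ x ≤ R} with hKdef
  have hK : IsCompact K := hcomp R hR0
  have hKcl : IsClosed K := hK.isClosed
  have hx₀K : x₀ ∈ K := hx₀R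
  -- the elementary bound: ψ⁻¹ f ≤ c/4 + ψ⁻¹ M
  have hbound : ∀ x, (ψ x)⁻¹ * f x ≤ c / 4 + (ψ x)⁻¹ * M := by
    intro x
    have h1 : f x ≤ |f x - g x| + M := by
      have := abs_sub_abs_le_abs_sub (f x) (g x)
      have h2 := le_abs_self (f x)
      have := hgM x
      linarith [abs_sub_abs_le_abs_sub (f x) (g x), le_abs_self (f x), hgM x,
        abs_nonneg (f x - g x)]
    have hinv : (0:ℝ) ≤ (ψ x)⁻¹ := (inv_pos.2 (hpos x)).le
    calc (ψ x)⁻¹ * f x ≤ (ψ x)⁻¹ * (|f x - g x| + M) := by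
          exact mul_le_mul_of_nonneg_left h1 hinv
      _ = (ψ x)⁻¹ * |f x - g x| + (ψ x)⁻¹ * M := by ring
      _ ≤ c / 4 + (ψ x)⁻¹ * M := by linarith [hfg x]
  -- outside K the weighted function is at most c/2
  have hout : ∀ x, R < ψ x → (ψ x)⁻¹ * f x ≤ c / 2 := by
    intro x hx
    have hψx := hpos x
    have h4M : 4 * M / c < ψ x := by linarith
    have hM : M ≤ c / 4 * ψ x := by
      rw [div_lt_iff₀ hcpos] at h4M
      nlinarith
    have : (ψ x)⁻¹ * M ≤ c / 4 := by
      rw [inv_mul_le_iff₀ hψx]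
      nlinarith
    linarith [hbound x]
  -- f is continuous on K
  have hfK : ContinuousOn f K := by
    choose G hG1 hG2 using fun n : ℕ => hf (1 / ((n : ℝ) + 1)) (by positivity)
    have hunif : TendstoUniformlyOn G f Filter.atTop K := by
      rw [Metric.tendstoUniformlyOn_iff]
      intro ε hε
      obtain ⟨N, hN⟩ := exists_nat_gt (R / ε)
      filter_upwards [Filter.eventually_ge_atTop N] with n hn x hxK
      have hψx := hpos x
      have hb : |f x - G n x| ≤ ψ x * (1 / ((n : ℝ) + 1)) := by
        have h2 := hG2 n x
        calc |f x - G n x| = ψ x * ((ψ x)⁻¹ * |f x - G n x|) := by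
              field_simp
          _ ≤ ψ x * (1 / ((n : ℝ) + 1)) := mul_le_mul_of_nonneg_left h2 hψx.le
      have hxR : ψ x ≤ R := hxK
      have hb2 : |f x - G n x| ≤ R * (1 / ((n : ℝ) + 1)) := by
        refine le_trans hb (mul_le_mul_of_nonneg_right hxR (by positivity))
      have hnn : (0:ℝ) < (n : ℝ) + 1 := by positivity
      have hNn : (N : ℝ) ≤ (n : ℝ) := Nat.cast_le.2 hn
      have hRe : R < ε * ((n : ℝ) + 1) := by
        rw [div_lt_iff₀ hε] at hN
        nlinarith
      have : R * (1 / ((n : ℝ) + 1)) < ε := by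
        rw [mul_one_div, div_lt_iff₀ hnn]
        linarith
      rw [Real.dist_eq]
      linarith
    exact hunif.continuousOn (Filter.Eventually.of_forall (f := Filter.atTop) fun n => (hG1 n).1.continuousOn).frequently
  -- the compact set A
  set A : Set X := {x | x ∈ K ∧ c / 2 * ψ x ≤ f x} with hAdef
  have hAsub : A ⊆ K := fun y hy => hy.1
  have hAcl : IsClosed A := by
    rw [← isOpen_compl_iff, isOpen_iff_mem_nhds]
    intro x hx
    by_cases hxK : x ∈ K
    · have hxf : f x < c / 2 * ψ x := by
        by_contra hcon
        exact hx ⟨hxK, not_lt.1 hcon⟩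
      set s : ℝ := (f x + c / 2 * ψ x) / 2 with hs
      have hs1 : f x < s := by simp only [hs]; linarith
      have hs2 : s < c / 2 * ψ x := by simp only [hs]; linarith
      have h1 : ∀ᶠ y in nhdsWithin x K, f y < s := (hfK x hxK).eventually_lt_const hs1
      rw [eventually_nhdsWithin_iff] at h1
      have hst : 2 * s / c < ψ x := by
        rw [div_lt_iff₀ hcpos]
        nlinarith
      have h2 : ∀ᶠ y in nhds x, 2 * s / c < ψ y := hlsc x _ hst
      filter_upwards [h1, h2] with y hy1 hy2
      intro hyA
      have hyK := hyA.1
      have := hyA.2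
      have hfy : f y < s := hy1 hyK
      have h3 : 2 * s < ψ y * c := (div_lt_iff₀ hcpos).1 hy2
      nlinarith
    · filter_upwards [hKcl.isOpen_compl.mem_nhds hxK] with y hy
      exact fun hyA => hy hyA.1
  have hA : IsCompact A := hK.of_isClosed_subset hAcl hAsub
  have hx₀A : x₀ ∈ A := by
    refine ⟨hx₀K, ?_⟩
    have : c / 2 * ψ x₀ ≤ c * ψ x₀ := by nlinarith
    have hceq : c * ψ x₀ = f x₀ := by
      rw [hc]; field_simp
    linarith
  -- upper semicontinuity of ψ⁻¹ f on A
  have husc : ∀ x ∈ A, ∀ t, (ψ x)⁻¹ * f x < t →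
      ∃ U, IsOpen U ∧ x ∈ U ∧ ∀ y ∈ U ∩ A, (ψ y)⁻¹ * f y < t := by
    intro x hxA t ht
    have hψx := hpos x
    have hxK := hxA.1
    have hfx : 0 < f x := lt_of_lt_of_le (by nlinarith) hxA.2
    have htp : 0 < t := lt_of_le_of_lt (by positivity) ht
    have hft : f x < t * ψ x := by
      rw [inv_mul_lt_iff₀ hψx] at ht
      linarith [ht]
    set s : ℝ := (f x + t * ψ x) / 2 with hs
    have hs1 : f x < s := by simp only [hs]; linarith
    have hs2 : s < t * ψ x := by simp only [hs]; linarith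
    have h1 : ∀ᶠ y in nhdsWithin x K, f y < s := (hfK x hxK).eventually_lt_const hs1
    rw [eventually_nhdsWithin_iff] at h1
    have hst : s / t < ψ x := by
      rw [div_lt_iff₀ htp]
      nlinarith
    have h2 : ∀ᶠ y in nhds x, s / t < ψ y := hlsc x _ hst
    have hE : {y | (y ∈ K → f y < s) ∧ s / t < ψ y} ∈ nhds x := by
      filter_upwards [h1, h2] with y hy1 hy2
      exact ⟨hy1, hy2⟩
    obtain ⟨U, hUE, hUo, hxU⟩ := mem_nhds_iff.1 hE
    refine ⟨U, hUo, hxU, ?_⟩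
    rintro y ⟨hyU, hyA⟩
    obtain ⟨hy1, hy2⟩ := hUE hyU
    have hψy := hpos y
    have hfy : f y < s := hy1 hyA.1
    have : s < t * ψ y := by
      rw [div_lt_iff₀ htp] at hy2
      nlinarith
    rw [inv_mul_lt_iff₀ hψy]
    linarith
  obtain ⟨z, hzA, hzmax⟩ := exists_max_of_usc hA ⟨x₀, hx₀A⟩ _ husc
  have hzc : c ≤ (ψ z)⁻¹ * f z := hzmax x₀ hx₀A
  refine ⟨z, fun x => ?_⟩
  by_cases hxA : x ∈ A
  · exact hzmax x hxA
  · rcases le_or_gt (ψ x) R with hxR | hxR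
    · have hxf : f x < c / 2 * ψ x := by
        by_contra hcon
        exact hxA ⟨hxR, not_lt.1 hcon⟩
      have hψx := hpos x
      have : (ψ x)⁻¹ * f x < c / 2 := by
        rw [inv_mul_lt_iff₀ hψx]
        nlinarith
      linarith
    · linarith [hout x hxR]
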